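/- Let 0 < r < ∞, s = n/r, and let g : ℝⁿ → ℂ be continuous and bounded. If there exists a constant A such that |∇g(t)| ≤ A·2^{1/2}·(1 + |x − t|)^s · sup_{u} |g(u)|/(1+|x−u|)^s for all t (a Bernstein-type bound), then the Peetre maximal function satisfies sup_t |g(t)|/(1 + |x − t|)^s ≤ C_{n,r} [M(|g|^r)(x)]^{1/r}, where M denotes the Hardy–Littlewood maximal function. -/

import Mathlib

open MeasureTheory Metric
open scoped ENNReal NNReal

set_option maxHeartbeats 2000000 in
/-- Peetre maximal function controlled by the Hardy–Littlewood maximal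
function of |g|^r, with s = n/r. -/
theorem stmt_10 (n : ℕ) (r : ℝ) (hr : 0 < r) (A : ℝ) :
    ∃ C : ℝ≥0∞, 0 < C ∧ C ≠ ⊤ ∧
      ∀ (g : EuclideanSpace ℝ (Fin n) → ℂ), Continuous g → (∃ M, ∀ t, ‖g t‖ ≤ M) →
      Differentiable ℝ g →
      ∀ x : EuclideanSpace ℝ (Fin n),
      (∀ t, ‖fderiv ℝ g t‖ ≤ A * (2:ℝ) ^ ((1:ℝ)/2) * (1 + ‖x - t‖) ^ ((n:ℝ)/r) *
          (⨆ u, ‖g u‖ / (1 + ‖x - u‖) ^ ((n:ℝ)/r))) →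
      ENNReal.ofReal (⨆ t, ‖g t‖ / (1 + ‖x - t‖) ^ ((n:ℝ)/r)) ≤
        C * (⨆ (R : ℝ) (_ : 0 < R),
          (volume (Metric.ball x R))⁻¹ *
            ∫⁻ y in Metric.ball x R, (‖g y‖₊ : ℝ≥0∞) ^ r) ^ (1/r) := by
  set s : ℝ := (n : ℝ) / r with hs_def
  have hs0 : 0 ≤ s := by positivity
  set A' : ℝ := max A 0 with hA'_def
  have hA'0 : 0 ≤ A' := le_max_right _ _
  have hAA' : A ≤ A' := le_max_left _ _
  set K : ℝ := A' * (2:ℝ) ^ ((1:ℝ)/2) * (2:ℝ) ^ s with hK_def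
  have hK0 : 0 ≤ K := by positivity
  set δ : ℝ := min 1 (1 / (4 * (K + 1))) with hδ_def
  have hδ0 : 0 < δ := lt_min one_pos (by positivity)
  have hδ1 : δ ≤ 1 := min_le_left _ _
  have hKδ : K * δ ≤ 1 / 4 := by
    have h1 : δ ≤ 1 / (4 * (K + 1)) := min_le_right _ _
    have h2 : K * δ ≤ K * (1 / (4 * (K + 1))) :=
      mul_le_mul_of_nonneg_left h1 hK0
    have h3 : K * (1 / (4 * (K + 1))) ≤ 1 / 4 := by
      rw [mul_one_div, div_le_div_iff₀ (by positivity) (by norm_num)]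
      nlinarith
    linarith
  refine ⟨ENNReal.ofReal (2 * δ ^ (-s)), ENNReal.ofReal_pos.2 (by positivity),
    ENNReal.ofReal_ne_top, ?_⟩
  intro g hgc hbdd hgd x hgrad
  obtain ⟨Mb, hMb⟩ := hbdd
  set f : EuclideanSpace ℝ (Fin n) → ℝ := fun t => ‖g t‖ / (1 + ‖x - t‖) ^ s with hf_def
  set S : ℝ := ⨆ t, f t with hS_def
  have hden : ∀ t : EuclideanSpace ℝ (Fin n), (1:ℝ) ≤ (1 + ‖x - t‖) ^ s := fun t =>
    Real.one_le_rpow (by linarith [norm_nonneg (x - t)]) hs0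
  have hdenpos : ∀ t : EuclideanSpace ℝ (Fin n), (0:ℝ) < (1 + ‖x - t‖) ^ s := fun t =>
    lt_of_lt_of_le one_pos (hden t)
  have hfnn : ∀ t, 0 ≤ f t := fun t => div_nonneg (norm_nonneg _) (hdenpos t).le
  have hBdd : BddAbove (Set.range f) := by
    refine ⟨max Mb 0, ?_⟩
    rintro _ ⟨t, rfl⟩
    calc f t ≤ ‖g t‖ := div_le_self (norm_nonneg _) (hden t)
      _ ≤ Mb := hMb t
      _ ≤ max Mb 0 := le_max_left _ _
  have hS0 : 0 ≤ S := le_trans (hfnn 0) (le_ciSup hBdd 0)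
  rcases eq_or_lt_of_le hS0 with hS | hS
  · rw [← hS]
    simp
  -- main case : 0 < S
  obtain ⟨t, ht⟩ : ∃ t, 3 / 4 * S < f t := exists_lt_of_lt_ciSup (by linarith)
  set d : ℝ := ‖x - t‖ with hd_def
  have hd0 : 0 ≤ d := norm_nonneg _
  have hgt : 3 / 4 * S * (1 + d) ^ s ≤ ‖g t‖ := by
    have ht' : 3 / 4 * S < ‖g t‖ / (1 + d) ^ s := ht
    exact ((lt_div_iff₀ (hdenpos t)).1 ht').le
  -- gradient bound on ball t δ
  have hLip : ∀ z ∈ ball t δ, ‖fderiv ℝ g z‖ ≤ K * (1 + d) ^ s * S := by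
    intro z hz
    have h1 := hgrad z
    have hxz : ‖x - z‖ ≤ d + 1 := by
      have : ‖x - z‖ ≤ ‖x - t‖ + ‖t - z‖ := by
        simpa using norm_add_le (x - t) (t - z)
      have hz' : ‖t - z‖ ≤ 1 := by
        have := mem_ball.1 hz
        rw [dist_comm] at this
        rw [← dist_eq_norm]
        linarith
      linarith
    have hbase : (1 + ‖x - z‖) ^ s ≤ 2 ^ s * (1 + d) ^ s := by
      rw [← Real.mul_rpow (by norm_num) (by linarith)]
      exact Real.rpow_le_rpow (by linarith [norm_nonneg (x - z)]) (by linarith) hs0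
    have h2 : A * (2:ℝ) ^ ((1:ℝ)/2) * (1 + ‖x - z‖) ^ s ≤ K * (1 + d) ^ s := by
      have e1 : A * (2:ℝ) ^ ((1:ℝ)/2) * (1 + ‖x - z‖) ^ s
          ≤ A' * (2:ℝ) ^ ((1:ℝ)/2) * (1 + ‖x - z‖) ^ s := by
        have : A * (2:ℝ) ^ ((1:ℝ)/2) ≤ A' * (2:ℝ) ^ ((1:ℝ)/2) :=
          mul_le_mul_of_nonneg_right hAA' (by positivity)
        exact mul_le_mul_of_nonneg_right this (hdenpos z).le
      have e2 : A' * (2:ℝ) ^ ((1:ℝ)/2) * (1 + ‖x - z‖) ^ s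
          ≤ A' * (2:ℝ) ^ ((1:ℝ)/2) * (2 ^ s * (1 + d) ^ s) :=
        mul_le_mul_of_nonneg_left hbase (by positivity)
      have e3 : A' * (2:ℝ) ^ ((1:ℝ)/2) * (2 ^ s * (1 + d) ^ s) = K * (1 + d) ^ s := by
        rw [hK_def]; ring
      linarith
    calc ‖fderiv ℝ g z‖ ≤ A * (2:ℝ) ^ ((1:ℝ)/2) * (1 + ‖x - z‖) ^ s * S := h1
      _ ≤ K * (1 + d) ^ s * S := mul_le_mul_of_nonneg_right h2 hS0
  -- lower bound for ‖g y‖ on ball t δ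
  have hgy : ∀ y ∈ ball t δ, 1 / 2 * S * (1 + d) ^ s ≤ ‖g y‖ := by
    intro y hy
    have hmvt := (convex_ball t δ).norm_image_sub_le_of_norm_fderiv_le
      (fun z _ => hgd z) hLip (mem_ball_self hδ0) hy
    have hyt : ‖y - t‖ ≤ δ := by
      rw [← dist_eq_norm]; exact (mem_ball.1 hy).le
    have hKS : 0 ≤ K * (1 + d) ^ s * S :=
      mul_nonneg (mul_nonneg hK0 (hdenpos t).le) hS0
    have h4 : ‖g y - g t‖ ≤ K * δ * (1 + d) ^ s * S := by
      calc ‖g y - g t‖ ≤ K * (1 + d) ^ s * S * ‖y - t‖ := hmvt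
        _ ≤ K * (1 + d) ^ s * S * δ := mul_le_mul_of_nonneg_left hyt hKS
        _ = K * δ * (1 + d) ^ s * S := by ring
    have h5 : K * δ * (1 + d) ^ s * S ≤ 1 / 4 * (1 + d) ^ s * S := by
      have h50 : 0 ≤ (1 + d) ^ s * S := mul_nonneg (hdenpos t).le hS0
      nlinarith
    have h6 := norm_sub_norm_le (g y) (g t)
    have h7 : ‖g y‖ ≥ ‖g t‖ - ‖g y - g t‖ := by
      have := norm_sub_norm_le (g t) (g y)
      have e : ‖g t - g y‖ = ‖g y - g t‖ := norm_sub_rev _ _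
      linarith
    nlinarith
  -- the ball radii
  set R : ℝ := d + δ with hR_def
  have hR0 : 0 < R := add_pos_of_nonneg_of_pos hd0 hδ0
  have hsub : ball t δ ⊆ ball x R := by
    intro y hy
    have h1 : dist y x ≤ dist y t + dist t x := dist_triangle _ _ _
    have h2 : dist t x = d := by rw [dist_comm, dist_eq_norm]
    rw [mem_ball] at hy ⊢
    linarith
  -- the constant lower bound for the integrand
  set c₀ : ℝ := (1 / 2 * S * (1 + d) ^ s) ^ r with hc₀_def
  have hbase0 : 0 ≤ 1 / 2 * S * (1 + d) ^ s :=
    mul_nonneg (mul_nonneg (by norm_num) hS0) (hdenpos t).le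
  have hc₀0 : 0 ≤ c₀ := Real.rpow_nonneg hbase0 r
  have hmeas : Measurable fun y : EuclideanSpace ℝ (Fin n) => (‖g y‖₊ : ℝ≥0∞) ^ r := by
    exact (hgc.measurable.nnnorm.coe_nnreal_ennreal).pow_const r
  have hint : ENNReal.ofReal c₀ * volume (ball t δ) ≤
      ∫⁻ y in ball x R, (‖g y‖₊ : ℝ≥0∞) ^ r := by
    calc ENNReal.ofReal c₀ * volume (ball t δ)
        = ∫⁻ _ in ball t δ, ENNReal.ofReal c₀ := (setLIntegral_const _ _).symm
      _ ≤ ∫⁻ y in ball t δ, (‖g y‖₊ : ℝ≥0∞) ^ r := by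
          refine setLIntegral_mono hmeas (fun y hy => ?_)
          have h1 : 1 / 2 * S * (1 + d) ^ s ≤ ‖g y‖ := hgy y hy
          have h2 : ((‖g y‖₊ : ℝ≥0∞)) ^ r = ENNReal.ofReal (‖g y‖ ^ r) := by
            rw [← ENNReal.ofReal_coe_nnreal, coe_nnnorm, ENNReal.ofReal_rpow_of_nonneg (norm_nonneg _) hr.le]
          rw [h2]
          exact ENNReal.ofReal_le_ofReal
            (Real.rpow_le_rpow hbase0 h1 hr.le)
      _ ≤ ∫⁻ y in ball x R, (‖g y‖₊ : ℝ≥0∞) ^ r := lintegral_mono_set hsub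
  -- relate c₀ to powers
  have hrne : r ≠ 0 := hr.ne'
  have hc₀eq : c₀ = (1 / 2 * S) ^ r * (1 + d) ^ (n : ℕ) := by
    rw [hc₀_def, Real.mul_rpow (mul_nonneg (by norm_num) hS0) (hdenpos t).le,
      ← Real.rpow_natCast (1 + d) n, ← Real.rpow_mul (by linarith), hs_def,
      div_mul_cancel₀ _ hrne]
  -- key term bound
  have hvolpos : volume (ball x R) ≠ 0 := (measure_ball_pos volume x hR0).ne'
  have hvolne : volume (ball x R) ≠ ⊤ := measure_ball_lt_top.ne
  have hterm : ENNReal.ofReal (δ ^ (n : ℕ) * (1 / 2 * S) ^ r) ≤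
      (volume (ball x R))⁻¹ * ∫⁻ y in ball x R, (‖g y‖₊ : ℝ≥0∞) ^ r := by
    have hmul : ENNReal.ofReal (δ ^ (n : ℕ) * (1 / 2 * S) ^ r) * volume (ball x R) ≤
        ENNReal.ofReal c₀ * volume (ball t δ) := by
      rcases Nat.eq_zero_or_pos n with hn | hn
      · -- n = 0 : both balls are the whole (trivial) space
        subst hn
        haveI : Subsingleton (EuclideanSpace ℝ (Fin 0)) := inferInstance
        have hdz : ∀ a b : EuclideanSpace ℝ (Fin 0), dist a b = 0 := fun a b => by
          rw [Subsingleton.elim a b, dist_self]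
        have hballs : ball t δ = ball x R := by
          ext y
          simp only [mem_ball, hdz]
          exact ⟨fun _ => hR0, fun _ => hδ0⟩
        rw [hballs]
        refine mul_le_mul_of_nonneg_right ?_ zero_le
        apply ENNReal.ofReal_le_ofReal
        rw [hc₀eq]
        simp
      · haveI : Nontrivial (EuclideanSpace ℝ (Fin n)) :=
          Module.nontrivial_of_finrank_pos (R := ℝ)
            (by rw [finrank_euclideanSpace_fin]; omega)
        have hvx : volume (ball x R) =
            ENNReal.ofReal (R ^ n) * volume (ball (0 : EuclideanSpace ℝ (Fin n)) 1) := by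
          rw [Measure.addHaar_ball volume x hR0.le, finrank_euclideanSpace_fin]
        have hvt : volume (ball t δ) =
            ENNReal.ofReal (δ ^ n) * volume (ball (0 : EuclideanSpace ℝ (Fin n)) 1) := by
          rw [Measure.addHaar_ball volume t hδ0.le, finrank_euclideanSpace_fin]
        rw [hvx, hvt, ← mul_assoc, ← mul_assoc, ← ENNReal.ofReal_mul (by positivity),
          ← ENNReal.ofReal_mul hc₀0]
        refine mul_le_mul_of_nonneg_right (ENNReal.ofReal_le_ofReal ?_) zero_le
        rw [hc₀eq]
        have hRle : R ^ n ≤ (1 + d) ^ n :=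
          pow_le_pow_left₀ hR0.le (by rw [hR_def]; linarith) n
        have h0 : 0 ≤ (1 / 2 * S) ^ r := Real.rpow_nonneg (by linarith) r
        calc δ ^ n * (1 / 2 * S) ^ r * R ^ n
            ≤ δ ^ n * (1 / 2 * S) ^ r * (1 + d) ^ n :=
              mul_le_mul_of_nonneg_left hRle
                (mul_nonneg (pow_nonneg hδ0.le n) h0)
          _ = (1 / 2 * S) ^ r * (1 + d) ^ n * δ ^ n := by ring
    have hle := le_trans hmul hint
    rw [← ENNReal.div_eq_inv_mul]
    exact (ENNReal.le_div_iff_mul_le (Or.inl hvolpos) (Or.inl hvolne)).2 hle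
  -- feed into the supremum
  set X : ℝ≥0∞ := ⨆ (R : ℝ) (_ : 0 < R),
      (volume (ball x R))⁻¹ * ∫⁻ y in ball x R, (‖g y‖₊ : ℝ≥0∞) ^ r with hX_def
  have hXge : ENNReal.ofReal (δ ^ (n : ℕ) * (1 / 2 * S) ^ r) ≤ X := by
    refine le_trans hterm ?_
    exact le_iSup₂ (f := fun (R : ℝ) (_ : 0 < R) =>
      (volume (ball x R))⁻¹ * ∫⁻ y in ball x R, (‖g y‖₊ : ℝ≥0∞) ^ r) R hR0
  have hpow : ENNReal.ofReal (δ ^ s * (1 / 2 * S)) ≤ X ^ (1 / r) := by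
    have h1 : (ENNReal.ofReal (δ ^ (n : ℕ) * (1 / 2 * S) ^ r)) ^ (1 / r) ≤ X ^ (1 / r) :=
      ENNReal.rpow_le_rpow hXge (by positivity)
    have h2 : (ENNReal.ofReal (δ ^ (n : ℕ) * (1 / 2 * S) ^ r)) ^ (1 / r) =
        ENNReal.ofReal (δ ^ s * (1 / 2 * S)) := by
      rw [ENNReal.ofReal_rpow_of_nonneg (by positivity) (by positivity)]
      congr 1
      rw [Real.mul_rpow (pow_nonneg hδ0.le n) (Real.rpow_nonneg (by linarith) r),
        ← Real.rpow_natCast δ n, ← Real.rpow_mul hδ0.le,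
        ← Real.rpow_mul (by linarith) r (1/r)]
      rw [mul_one_div, mul_one_div, div_self hrne, Real.rpow_one, hs_def]
    rw [← h2]; exact h1
  calc ENNReal.ofReal S = ENNReal.ofReal (2 * δ ^ (-s)) * ENNReal.ofReal (δ ^ s * (1 / 2 * S)) := by
        rw [← ENNReal.ofReal_mul (by positivity)]
        congr 1
        have hδs : δ ^ (-s) * δ ^ s = 1 := by
          rw [← Real.rpow_add hδ0]; simp
        have : 2 * δ ^ (-s) * (δ ^ s * (1 / 2 * S)) = δ ^ (-s) * δ ^ s * S := by ring
        rw [this, hδs, one_mul]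
    _ ≤ ENNReal.ofReal (2 * δ ^ (-s)) * X ^ (1 / r) := mul_le_mul_right hpow _
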